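/- For every natural number n, a₂(2n+1) = 2·a₁(n). -/

import Mathlib

open Polynomial

/-- `a₁ n` : number of nonzero coefficients of `(1+x+x²)ⁿ` over `𝔽₂`. -/
noncomputable def a1 (n : ℕ) : ℕ :=
  (((1 + X + X ^ 2 : (ZMod 2)[X]) ^ n).support).card

/-- `a₂ n` : number of nonzero coefficients of `(1+x)(1+x+x²)ⁿ` over `𝔽₂`. -/
noncomputable def a2 (n : ℕ) : ℕ :=
  (((1 + X) * (1 + X + X ^ 2 : (ZMod 2)[X]) ^ n).support).card

lemma support_mul_X_pow (p : (ZMod 2)[X]) (d : ℕ) :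
    (p * X ^ d).support = p.support.image (· + d) := by
  ext k
  simp only [Finset.mem_image, mem_support_iff, coeff_mul_X_pow']
  constructor
  · intro h
    by_cases hd : d ≤ k
    · exact ⟨k - d, by simpa [hd] using h, by omega⟩
    · simp [hd] at h
  · rintro ⟨m, hm, rfl⟩
    simpa using hm

lemma support_expand_two (p : (ZMod 2)[X]) :
    (expand (ZMod 2) 2 p).support = p.support.image (2 * ·) := by
  ext k
  simp only [Finset.mem_image, mem_support_iff, coeff_expand (by norm_num : 0 < 2)]
  constructor
  · intro h
    by_cases hd : 2 ∣ k
    · exact ⟨k / 2, by simpa [hd] using h, (Nat.mul_div_cancel' hd)⟩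
    · simp [hd] at h
  · rintro ⟨m, hm, rfl⟩
    simpa [Nat.mul_div_cancel_left m (by norm_num : 0 < 2)] using hm

lemma support_add_of_disjoint {p q : (ZMod 2)[X]} (h : Disjoint p.support q.support) :
    (p + q).support = p.support ∪ q.support := by
  ext k
  simp only [Finset.mem_union, mem_support_iff, coeff_add]
  constructor
  · intro hk
    by_contra hc
    push_neg at hc
    simp [hc.1, hc.2] at hk
  · rintro (h1 | h1)
    · have hq : q.coeff k = 0 := by
        by_contra hq
        exact (Finset.disjoint_left.mp h (mem_support_iff.mpr h1)) (mem_support_iff.mpr hq)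
      simp [hq, h1]
    · have hp : p.coeff k = 0 := by
        by_contra hp
        exact (Finset.disjoint_left.mp h (mem_support_iff.mpr hp)) (mem_support_iff.mpr h1)
      simp [hp, h1]

theorem a2_two_mul_add_one (n : ℕ) : a2 (2 * n + 1) = 2 * a1 n := by
  set f : (ZMod 2)[X] := (1 + X + X ^ 2) ^ n with hf
  have h2 : (2 : (ZMod 2)[X]) = 0 := by
    exact_mod_cast CharP.cast_eq_zero (ZMod 2)[X] 2
  have hsq : expand (ZMod 2) 2 f = f ^ 2 := by
    have hfrob : frobenius (ZMod 2) 2 = RingHom.id (ZMod 2) := by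
      ext x; exact ZMod.pow_card x
    have := map_frobenius_expand 2 f
    rwa [hfrob, Polynomial.map_id] at this
  set g : (ZMod 2)[X] := expand (ZMod 2) 2 f with hg
  have key : (1 + X) * (1 + X + X ^ 2 : (ZMod 2)[X]) ^ (2 * n + 1) = g + g * X ^ 3 := by
    have : (1 + X + X ^ 2 : (ZMod 2)[X]) ^ (2 * n + 1)
        = f ^ 2 * (1 + X + X ^ 2) := by
      rw [hf, ← pow_mul, ← pow_succ, Nat.mul_comm]
    rw [this, hsq]
    linear_combination (X + X ^ 2 : (ZMod 2)[X]) * f ^ 2 * h2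
  have hdisj : Disjoint g.support (g * X ^ 3).support := by
    rw [support_mul_X_pow, hg, support_expand_two]
    rw [Finset.disjoint_left]
    rintro k hk hk'
    simp only [Finset.mem_image] at hk hk'
    obtain ⟨a, -, rfl⟩ := hk
    obtain ⟨b, hb1, hb2⟩ := hk'
    obtain ⟨c, -, rfl⟩ := hb1
    omega
  have hcard3 : (g * X ^ 3).support.card = g.support.card := by
    rw [support_mul_X_pow]
    exact Finset.card_image_of_injective _ (fun a b h => by omega)
  have hcardg : g.support.card = f.support.card := by
    rw [hg, support_expand_two]
    exact Finset.card_image_of_injective _ (fun a b h => by omega)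
  rw [a2, key, support_add_of_disjoint hdisj, Finset.card_union_of_disjoint hdisj,
    hcard3, hcardg, a1, ← hf]
  ring
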